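/- Gauss–Southwell descent: under the block descent setting, if block i is chosen to maximize |∇_{(i)} f(x)| over the P blocks, then f(x) − f(x⁺) ≥ (1/P)(α − α²L_max/2)|∇f(x)|², where x⁺ = x − α H_i ∇_{(i)} f(x) and 0 < α < 2/L_max. -/

import Mathlib

/-- Projection of a vector onto the coordinates in a block `S`
(all other coordinates are set to zero). -/
def blockProj {n : ℕ} (S : Finset (Fin n)) (v : EuclideanSpace ℝ (Fin n)) :
    EuclideanSpace ℝ (Fin n) :=
  WithLp.toLp 2 (fun j => if j ∈ S then v j else 0)


open Finset RealInnerProductSpace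

lemma inner_blockProj {n : ℕ} (S : Finset (Fin n)) (v u : EuclideanSpace ℝ (Fin n))
    (hu : ∀ j, j ∉ S → u j = 0) : ⟪v, u⟫ = ⟪blockProj S v, u⟫ := by
  simp only [PiLp.inner_apply, RCLike.inner_apply, conj_trivial, blockProj]
  refine Finset.sum_congr rfl fun j _ => ?_
  by_cases h : j ∈ S <;> simp [h, hu j]

lemma norm_sq_sum {n : ℕ} (v : EuclideanSpace ℝ (Fin n)) : ‖v‖^2 = ∑ j, (v j)^2 := by
  rw [← real_inner_self_eq_norm_sq]
  simp only [PiLp.inner_apply, RCLike.inner_apply, conj_trivial, sq]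

lemma line_deriv {n : ℕ} (f : EuclideanSpace ℝ (Fin n) → ℝ) (hdiff : Differentiable ℝ f)
    (x u : EuclideanSpace ℝ (Fin n)) (t : ℝ) :
    HasDerivAt (fun s : ℝ => f (x + s • u)) ⟪gradient f (x + t • u), u⟫ t := by
  have hline : HasDerivAt (fun s : ℝ => x + s • u) u t := by
    simpa using ((hasDerivAt_id t).smul_const u).const_add x
  have hf := (hdiff (x + t • u)).hasGradientAt
  rw [hasGradientAt_iff_hasFDerivAt] at hf
  have := hf.comp_hasDerivAt t hline
  simp only [InnerProductSpace.toDual_apply_apply] at this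
  exact this

lemma descent {n : ℕ} (S : Finset (Fin n)) (f : EuclideanSpace ℝ (Fin n) → ℝ)
    (hdiff : Differentiable ℝ f) (L : ℝ) (hL : 0 ≤ L)
    (x u : EuclideanSpace ℝ (Fin n))
    (hlip : ∀ u' : EuclideanSpace ℝ (Fin n), (∀ j, j ∉ S → u' j = 0) →
      ‖blockProj S (gradient f (x + u')) - blockProj S (gradient f x)‖ ≤ L * ‖u'‖)
    (hu : ∀ j, j ∉ S → u j = 0) :
    f (x + u) ≤ f x + ⟪blockProj S (gradient f x), u⟫ + L * ‖u‖ ^ 2 / 2 := by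
  set c : ℝ := ⟪blockProj S (gradient f x), u⟫ with hc
  set ψ : ℝ → ℝ := fun t => f (x + t • u) - t * c - L * ‖u‖ ^ 2 * t ^ 2 / 2 with hψ
  have hψd : ∀ t : ℝ, HasDerivAt ψ
      (⟪gradient f (x + t • u), u⟫ - c - L * ‖u‖ ^ 2 * t) t := by
    intro t
    have h1 := line_deriv f hdiff x u t
    have h2 : HasDerivAt (fun t : ℝ => t * c) c t := by
      simpa using (hasDerivAt_id t).mul_const c
    have h3 : HasDerivAt (fun t : ℝ => L * ‖u‖ ^ 2 * t ^ 2 / 2) (L * ‖u‖ ^ 2 * t) t := by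
      have := ((hasDerivAt_pow 2 t).const_mul (L * ‖u‖ ^ 2)).div_const 2
      refine this.congr_deriv ?_
      rw [show (2:ℕ) - 1 = 1 from rfl]; push_cast; ring
    exact (h1.sub h2).sub h3
  have key : ∀ t ∈ Set.Icc (0:ℝ) 1,
      ⟪gradient f (x + t • u), u⟫ - c - L * ‖u‖ ^ 2 * t ≤ 0 := by
    intro t ht
    have htu : ∀ j, j ∉ S → (t • u) j = 0 := fun j hj => by
      simp [PiLp.smul_apply, hu j hj]
    have h1 : ⟪gradient f (x + t • u), u⟫ - c
        = ⟪blockProj S (gradient f (x + t • u)) - blockProj S (gradient f x), u⟫ := by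
      rw [inner_sub_left, hc, inner_blockProj S (gradient f (x + t • u)) u hu]
    have h2 := real_inner_le_norm
      (blockProj S (gradient f (x + t • u)) - blockProj S (gradient f x)) u
    have h3 := hlip (t • u) htu
    have h4 : ‖t • u‖ = t * ‖u‖ := by
      rw [norm_smul, Real.norm_eq_abs, abs_of_nonneg ht.1]
    rw [h4] at h3
    have h5 := mul_le_mul_of_nonneg_right h3 (norm_nonneg u)
    rw [h1]
    nlinarith [norm_nonneg u, sq_nonneg ‖u‖]
  have hcont : ContinuousOn ψ (Set.Icc 0 1) := fun t _ =>
    ((hψd t).differentiableAt.continuousAt).continuousWithinAt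
  have hdiffψ : DifferentiableOn ℝ ψ (interior (Set.Icc (0:ℝ) 1)) := fun t _ =>
    ((hψd t).differentiableAt).differentiableWithinAt
  have hder : ∀ t ∈ interior (Set.Icc (0:ℝ) 1), deriv ψ t ≤ 0 := by
    intro t ht
    rw [(hψd t).deriv]
    exact key t (interior_subset ht)
  have hanti := antitoneOn_of_deriv_nonpos (convex_Icc 0 1) hcont hdiffψ hder
  have h10 := hanti (Set.left_mem_Icc.mpr zero_le_one)
    (Set.right_mem_Icc.mpr zero_le_one) zero_le_one
  simp only [hψ, zero_smul, add_zero, one_smul, zero_mul, one_mul, one_pow,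
    ne_eq, OfNat.ofNat_ne_zero, not_false_eq_true, zero_pow, mul_zero, zero_div,
    sub_zero] at h10
  linarith

lemma sum_blockProj_sq {n P : ℕ} (S : Fin P → Finset (Fin n))
    (hpart : ∀ j : Fin n, ∃! i : Fin P, j ∈ S i) (v : EuclideanSpace ℝ (Fin n)) :
    ∑ i, ‖blockProj (S i) v‖^2 = ‖v‖^2 := by
  simp_rw [norm_sq_sum]
  rw [Finset.sum_comm]
  refine Finset.sum_congr rfl fun j _ => ?_
  obtain ⟨i0, hi0, huniq⟩ := hpart j
  rw [Finset.sum_eq_single i0]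
  · simp [blockProj, hi0]
  · intro b _ hb
    have hnb : j ∉ S b := fun h => hb (huniq b h)
    simp [blockProj, hnb]
  · simp

theorem stmt_16 (n P : ℕ) (hP : 1 ≤ P)
    (S : Fin P → Finset (Fin n))
    (hpart : ∀ j : Fin n, ∃! i : Fin P, j ∈ S i)
    (f : EuclideanSpace ℝ (Fin n) → ℝ) (hdiff : Differentiable ℝ f)
    (Lb : Fin P → ℝ) (Lmax : ℝ) (hLb : ∀ i, Lb i ≤ Lmax) (hLmax : 0 < Lmax)
    (hblip : ∀ i : Fin P, ∀ x u : EuclideanSpace ℝ (Fin n),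
      (∀ j : Fin n, j ∉ S i → u j = 0) →
      ‖blockProj (S i) (gradient f (x + u)) - blockProj (S i) (gradient f x)‖
        ≤ Lb i * ‖u‖)
    (i : Fin P) (x xplus : EuclideanSpace ℝ (Fin n)) (α : ℝ)
    (hα : 0 < α) (hα2 : α < 2 / Lmax)
    (hGS : ∀ i' : Fin P,
      ‖blockProj (S i') (gradient f x)‖ ≤ ‖blockProj (S i) (gradient f x)‖)
    (hstep : xplus = x - α • blockProj (S i) (gradient f x)) :
    f x - f xplus ≥
      (1 / (P : ℝ)) * (α - α ^ 2 * Lmax / 2) * ‖gradient f x‖ ^ 2 := by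
  classical
  set g := blockProj (S i) (gradient f x) with hg
  set u : EuclideanSpace ℝ (Fin n) := (-α) • g with hu
  have hsupp : ∀ j, j ∉ S i → u j = 0 := fun j hj => by
    simp [hu, hg, PiLp.smul_apply, blockProj, hj]
  have hlip : ∀ u' : EuclideanSpace ℝ (Fin n), (∀ j, j ∉ S i → u' j = 0) →
      ‖blockProj (S i) (gradient f (x + u')) - blockProj (S i) (gradient f x)‖
        ≤ Lmax * ‖u'‖ := fun u' hu' =>
    (hblip i x u' hu').trans (mul_le_mul_of_nonneg_right (hLb i) (norm_nonneg u'))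
  have hd := descent (S i) f hdiff Lmax hLmax.le x u hlip hsupp
  have hxplus : x + u = xplus := by
    rw [hstep, hu, neg_smul, sub_eq_add_neg]
  have hinner : ⟪blockProj (S i) (gradient f x), u⟫ = -α * ‖g‖^2 := by
    rw [← hg, hu, real_inner_smul_right, real_inner_self_eq_norm_sq]
  have hnorm : ‖u‖^2 = α^2 * ‖g‖^2 := by
    rw [hu, norm_smul, mul_pow, Real.norm_eq_abs, sq_abs, neg_pow]
    ring
  rw [hxplus, hinner, hnorm] at hd
  -- GS bound
  have hP' : (0:ℝ) < P := by exact_mod_cast hP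
  have hsum : ‖gradient f x‖^2 ≤ P * ‖g‖^2 := by
    rw [← sum_blockProj_sq S hpart (gradient f x)]
    calc ∑ i', ‖blockProj (S i') (gradient f x)‖^2
        ≤ ∑ _i' : Fin P, ‖g‖^2 :=
          Finset.sum_le_sum fun i' _ => by
            exact pow_le_pow_left₀ (norm_nonneg _) (hGS i') 2
      _ = P * ‖g‖^2 := by simp [mul_comm]
  have hB : (1 / (P:ℝ)) * ‖gradient f x‖^2 ≤ ‖g‖^2 := by
    rw [div_mul_eq_mul_div, one_mul, div_le_iff₀ hP']
    linarith [hsum]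
  have hαL : α * Lmax < 2 := by
    rw [lt_div_iff₀ hLmax] at hα2; linarith
  have hc : 0 ≤ α - α^2 * Lmax / 2 := by nlinarith
  have h1 : (α - α^2 * Lmax / 2) * ((1 / (P:ℝ)) * ‖gradient f x‖^2)
      ≤ (α - α^2 * Lmax / 2) * ‖g‖^2 := mul_le_mul_of_nonneg_left hB hc
  nlinarith [h1, hd]
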